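/- Let A be a commutative Banach algebra with a bounded approximate identity of norm bound 1, and let E ∈ A** be a w*-cluster point of such an approximate identity. Then E is a right identity for (A**, □) of norm one, and the closed right ideal E □ A** is isometrically isomorphic as a Banach algebra to LUC(A*)* via the restriction map, where LUC(A*) = A*·A (closed linear span). -/

import Mathlib

open scoped Topology
open Filter

set_option synthInstance.maxHeartbeats 1000000
set_option maxHeartbeats 1000000

noncomputable def fdot {A : Type*} [NonUnitalNormedRing A] [NormedSpace ℂ A]
    [IsScalarTower ℂ A A] [SMulCommClass ℂ A A] (f : A →L[ℂ] ℂ) (a : A) : A →L[ℂ] ℂ :=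
  f.comp (ContinuousLinearMap.mul ℂ A a)

noncomputable def fdotMapA {A : Type*} [NonUnitalNormedRing A] [NormedSpace ℂ A]
    [IsScalarTower ℂ A A] [SMulCommClass ℂ A A] (f : A →L[ℂ] ℂ) : A →L[ℂ] (A →L[ℂ] ℂ) :=
  ((ContinuousLinearMap.compL ℂ A A ℂ) f).comp (ContinuousLinearMap.mul ℂ A)

noncomputable def LUCsub (A : Type*) [NonUnitalNormedRing A] [NormedSpace ℂ A]
    [IsScalarTower ℂ A A] [SMulCommClass ℂ A A] : Submodule ℂ (A →L[ℂ] ℂ) :=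
  (Submodule.span ℂ {g : A →L[ℂ] ℂ | ∃ f a, g = fdot f a}).topologicalClosure

/-- `f ↦ fdotMapA f` as a continuous linear map. -/
noncomputable def fdotMapACLM (A : Type*) [NonUnitalNormedRing A] [NormedSpace ℂ A]
    [IsScalarTower ℂ A A] [SMulCommClass ℂ A A] :
    (A →L[ℂ] ℂ) →L[ℂ] (A →L[ℂ] (A →L[ℂ] ℂ)) :=
  ((ContinuousLinearMap.compL ℂ A (A →L[ℂ] A) (A →L[ℂ] ℂ)).flip
    (ContinuousLinearMap.mul ℂ A)).comp (ContinuousLinearMap.compL ℂ A A ℂ)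

lemma fdotMapACLM_apply {A : Type*} [NonUnitalNormedRing A] [NormedSpace ℂ A]
    [IsScalarTower ℂ A A] [SMulCommClass ℂ A A] (f : A →L[ℂ] ℂ) :
    fdotMapACLM A f = fdotMapA f := rfl

lemma fdot_apply {A : Type*} [NonUnitalNormedRing A] [NormedSpace ℂ A]
    [IsScalarTower ℂ A A] [SMulCommClass ℂ A A] (f : A →L[ℂ] ℂ) (a x : A) :
    fdot f a x = f (a * x) := rfl

lemma fdotMapA_apply {A : Type*} [NonUnitalNormedRing A] [NormedSpace ℂ A]
    [IsScalarTower ℂ A A] [SMulCommClass ℂ A A] (f : A →L[ℂ] ℂ) (a : A) :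
    fdotMapA f a = fdot f a := rfl

lemma fdot_norm_le {A : Type*} [NonUnitalNormedRing A] [NormedSpace ℂ A]
    [IsScalarTower ℂ A A] [SMulCommClass ℂ A A] (f : A →L[ℂ] ℂ) (a : A) :
    ‖fdot f a‖ ≤ ‖f‖ * ‖a‖ :=
  le_trans (ContinuousLinearMap.opNorm_comp_le _ _)
    (mul_le_mul_of_nonneg_left (ContinuousLinearMap.opNorm_mul_apply_le ℂ A a) (norm_nonneg f))

/-- Let A be a commutative Banach algebra with an approximate identity bounded
by one and let E be a w*-cluster point of it in A**.  Then E is a right identity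
of norm one for the first Arens product (E·f = f for all f, hence m □ E = m),
and the closed right ideal E □ A** is isometrically isomorphic to LUC(A*)* via
the restriction map. -/
theorem stmt17 {A : Type*} [NonUnitalNormedCommRing A] [NormedSpace ℂ A]
    [IsScalarTower ℂ A A] [SMulCommClass ℂ A A] [CompleteSpace A] [Nontrivial A]
    {ι : Type*} (l : Filter ι) [l.NeBot] (u : ι → A)
    (hu1 : ∀ j, ‖u j‖ ≤ 1)
    (hai : ∀ a : A, Tendsto (fun j => u j * a) l (𝓝 a))
    (E : (A →L[ℂ] ℂ) →L[ℂ] ℂ)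
    (hE : MapClusterPt (show WeakDual ℂ (A →L[ℂ] ℂ) from E) l
      (fun j => (NormedSpace.inclusionInDoubleDual ℂ A (u j) : WeakDual ℂ (A →L[ℂ] ℂ)))) :
    ‖E‖ = 1 ∧
    (∀ f : A →L[ℂ] ℂ, E.comp (fdotMapA f) = f) ∧
    -- the restriction map E □ A** → LUC(A*)* is isometric ...
    (∀ m : (A →L[ℂ] ℂ) →L[ℂ] ℂ,
      (∃ n : (A →L[ℂ] ℂ) →L[ℂ] ℂ, ∀ f, m f = E (n.comp (fdotMapA f))) →
      sSup {r : ℝ | ∃ f ∈ LUCsub A, ‖f‖ ≤ 1 ∧ r = ‖m f‖} = ‖m‖) ∧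
    -- ... and surjective: every functional on LUC(A*) is the restriction of an
    -- element of E □ A**
    (∀ n' : ↥(LUCsub A) →L[ℂ] ℂ,
      ∃ m : (A →L[ℂ] ℂ) →L[ℂ] ℂ,
        (∃ n : (A →L[ℂ] ℂ) →L[ℂ] ℂ, ∀ f, m f = E (n.comp (fdotMapA f))) ∧
        m.comp (LUCsub A).subtypeL = n') := by
  -- Step 0: evaluation at any φ clusters.
  have hclE : ∀ φ : A →L[ℂ] ℂ, MapClusterPt (E φ) l (fun j => φ (u j)) := by
    intro φ
    have hc : ContinuousAt (fun x : WeakDual ℂ (A →L[ℂ] ℂ) => x φ)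
        (show WeakDual ℂ (A →L[ℂ] ℂ) from E) :=
      (WeakDual.eval_continuous φ).continuousAt
    exact hE.continuousAt_comp hc
  -- Step 1: E φ equals the limit of φ (u j) whenever that converges.
  have hEeq : ∀ (φ : A →L[ℂ] ℂ) (c : ℂ),
      Tendsto (fun j => φ (u j)) l (𝓝 c) → E φ = c := by
    intro φ c hc
    have h1 : ClusterPt (E φ) (map (fun j => φ (u j)) l) := hclE φ
    exact eq_of_nhds_neBot (h1.mono hc)
  -- Step 2: cluster norm bound.
  have hbnd : ∀ (φ : A →L[ℂ] ℂ) (c : ℝ), (∀ j, ‖φ (u j)‖ ≤ c) → ‖E φ‖ ≤ c := by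
    intro φ c hc
    have h1 : ClusterPt (E φ) (map (fun j => φ (u j)) l) := hclE φ
    have h2 : ClusterPt (E φ) (𝓟 {z : ℂ | ‖z‖ ≤ c}) :=
      h1.mono (le_principal_iff.2 (by rw [mem_map]; exact univ_mem' hc))
    have h3 := mem_closure_iff_clusterPt.2 h2
    rwa [IsClosed.closure_eq (isClosed_le continuous_norm continuous_const)] at h3
  -- Step 3: E is a right identity: E (fdot f a) = f a.
  have hid : ∀ (f : A →L[ℂ] ℂ) (a : A), E (fdot f a) = f a := by
    intro f a
    apply hEeq
    have h1 : Tendsto (fun j => f (u j * a)) l (𝓝 (f a)) :=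
      (f.continuous.tendsto a).comp (hai a)
    convert h1 using 2 with j
    simp [fdot_apply, mul_comm]
  have hid' : ∀ f : A →L[ℂ] ℂ, E.comp (fdotMapA f) = f := by
    intro f
    ext a
    exact hid f a
  -- Step 4: generator identity.
  have hgen : ∀ (n : (A →L[ℂ] ℂ) →L[ℂ] ℂ) (f : A →L[ℂ] ℂ) (a : A),
      E (n.comp (fdotMapA (fdot f a))) = n (fdot f a) := by
    intro n f a
    apply hEeq
    have h1 : Tendsto (fun j => a * u j) l (𝓝 a) := by
      simpa only [mul_comm] using hai a
    have h2 : Tendsto (fun j => n (fdotMapA f (a * u j))) l (𝓝 (n (fdotMapA f a))) :=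
      (n.continuous.tendsto _).comp (((fdotMapA f).continuous.tendsto a).comp h1)
    have h3 : ∀ j, (n.comp (fdotMapA (fdot f a))) (u j) = n (fdotMapA f (a * u j)) := by
      intro j
      rw [ContinuousLinearMap.comp_apply]
      congr 1
      ext x
      show f (a * (u j * x)) = f (a * u j * x)
      rw [mul_assoc]
    rw [show n (fdotMapA f a) = n (fdot f a) from rfl] at h2
    simpa only [h3] using h2
  -- Step 5: agreement on LUCsub.
  have honLUC : ∀ (n : (A →L[ℂ] ℂ) →L[ℂ] ℂ) (h : A →L[ℂ] ℂ), h ∈ LUCsub A →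
      E (n.comp (fdotMapA h)) = n h := by
    intro n h hh
    set D : (A →L[ℂ] ℂ) →L[ℂ] ℂ :=
      (E.comp (((ContinuousLinearMap.compL ℂ A (A →L[ℂ] ℂ) ℂ) n).comp (fdotMapACLM A))) - n
      with hD
    have hDapp : ∀ g, D g = E (n.comp (fdotMapA g)) - n g := fun g => rfl
    have hker : LUCsub A ≤ LinearMap.ker (D : (A →L[ℂ] ℂ) →ₗ[ℂ] ℂ) := by
      apply Submodule.topologicalClosure_minimal
      · rw [Submodule.span_le]
        rintro g ⟨f, a, rfl⟩
        simp only [SetLike.mem_coe, LinearMap.mem_ker, ContinuousLinearMap.coe_coe, hDapp,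
          sub_eq_zero]
        exact hgen n f a
      · exact ContinuousLinearMap.isClosed_ker D
    have h4 : D h = 0 := hker hh
    rw [hDapp h, sub_eq_zero] at h4
    exact h4
  -- norm of E
  have hE_le : ‖E‖ ≤ 1 := by
    refine E.opNorm_le_bound zero_le_one ?_
    intro φ
    rw [one_mul]
    refine hbnd φ ‖φ‖ fun j => ?_
    calc ‖φ (u j)‖ ≤ ‖φ‖ * ‖u j‖ := φ.le_opNorm _
      _ ≤ ‖φ‖ * 1 := mul_le_mul_of_nonneg_left (hu1 j) (norm_nonneg φ)
      _ = ‖φ‖ := mul_one _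
  have hE_ge : (1 : ℝ) ≤ ‖E‖ := by
    obtain ⟨a, ha⟩ := exists_ne (0 : A)
    obtain ⟨f, hf1, hfa⟩ := exists_dual_vector ℂ a (norm_ne_zero_iff.2 ha)
    have h2 : E (fdot f a) = (‖a‖ : ℂ) := by
      rw [hid f a, hfa]; norm_cast
    have h3 : ‖fdot f a‖ ≤ ‖a‖ := by
      have := fdot_norm_le f a
      rwa [hf1, one_mul] at this
    have h4 : (‖a‖ : ℝ) ≤ ‖E‖ * ‖a‖ := by
      calc (‖a‖ : ℝ) = ‖E (fdot f a)‖ := by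
              rw [h2]
              exact ((RCLike.norm_ofReal (K := ℂ) ‖a‖).trans (abs_norm a)).symm
        _ ≤ ‖E‖ * ‖fdot f a‖ := E.le_opNorm _
        _ ≤ ‖E‖ * ‖a‖ := mul_le_mul_of_nonneg_left h3 (norm_nonneg E)
    have ha' : (0 : ℝ) < ‖a‖ := norm_pos_iff.2 ha
    exact le_of_mul_le_mul_right (by linarith) ha'
  refine ⟨le_antisymm hE_le hE_ge, hid', ?_, ?_⟩
  · -- the isometry
    rintro m ⟨n, hm⟩
    set S := {r : ℝ | ∃ f ∈ LUCsub A, ‖f‖ ≤ 1 ∧ r = ‖m f‖} with hS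
    have h0S : (0 : ℝ) ∈ S := ⟨0, (LUCsub A).zero_mem, by simp⟩
    have hbddS : BddAbove S := by
      refine ⟨‖m‖, ?_⟩
      rintro r ⟨f, hf, hf1, rfl⟩
      calc ‖m f‖ ≤ ‖m‖ * ‖f‖ := m.le_opNorm f
        _ ≤ ‖m‖ * 1 := mul_le_mul_of_nonneg_left hf1 (norm_nonneg m)
        _ = ‖m‖ := mul_one _
    have hsup_le : sSup S ≤ ‖m‖ := by
      refine Real.sSup_le ?_ (norm_nonneg m)
      rintro r ⟨f, hf, hf1, rfl⟩
      calc ‖m f‖ ≤ ‖m‖ * ‖f‖ := m.le_opNorm f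
        _ ≤ ‖m‖ * 1 := mul_le_mul_of_nonneg_left hf1 (norm_nonneg m)
        _ = ‖m‖ := mul_one _
    have hsup0 : (0 : ℝ) ≤ sSup S := le_csSup hbddS h0S
    have hmn : ∀ h ∈ LUCsub A, m h = n h := fun h hh => (hm h).trans (honLUC n h hh)
    have key : ∀ f : A →L[ℂ] ℂ, ‖f‖ ≤ 1 → ‖m f‖ ≤ sSup S := by
      intro f hf
      rw [hm f]
      refine hbnd _ _ fun j => ?_
      have hmem : fdot f (u j) ∈ LUCsub A :=
        Submodule.le_topologicalClosure _ (Submodule.subset_span ⟨f, u j, rfl⟩)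
      have hnorm : ‖fdot f (u j)‖ ≤ 1 := by
        calc ‖fdot f (u j)‖ ≤ ‖f‖ * ‖u j‖ := fdot_norm_le f (u j)
          _ ≤ 1 * 1 := mul_le_mul hf (hu1 j) (norm_nonneg _) zero_le_one
          _ = 1 := one_mul _
      have h5 : (n.comp (fdotMapA f)) (u j) = m (fdot f (u j)) := by
        rw [hmn _ hmem]; rfl
      rw [h5]
      exact le_csSup hbddS ⟨_, hmem, hnorm, rfl⟩
    have hle : ‖m‖ ≤ sSup S := by
      refine m.opNorm_le_bound hsup0 ?_
      intro f
      rcases eq_or_ne f 0 with rfl | hf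
      · simp
      · have hfpos : (0 : ℝ) < ‖f‖ := norm_pos_iff.2 hf
        have h6 : ‖((‖f‖ : ℂ)⁻¹ • f : A →L[ℂ] ℂ)‖ ≤ 1 := by
          rw [norm_smul ((‖f‖ : ℂ)⁻¹) f, norm_inv]
          simp only [Complex.norm_real, Real.norm_eq_abs, abs_norm]
          rw [inv_mul_cancel₀ (ne_of_gt hfpos)]
        have h7 := key _ h6
        rw [map_smul, norm_smul ((‖f‖ : ℂ)⁻¹) (m f), norm_inv] at h7
        simp only [Complex.norm_real, Real.norm_eq_abs, abs_norm] at h7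
        have h8 : ‖f‖⁻¹ * ‖m f‖ ≤ sSup S := h7
        calc ‖m f‖ = ‖f‖ * (‖f‖⁻¹ * ‖m f‖) := by
              field_simp
        _ ≤ ‖f‖ * sSup S := mul_le_mul_of_nonneg_left h8 (le_of_lt hfpos)
        _ = sSup S * ‖f‖ := mul_comm _ _
    exact le_antisymm hsup_le hle
  · -- surjectivity
    intro n'
    obtain ⟨n, hn_ext, -⟩ := exists_extension_norm_eq (LUCsub A) n'
    refine ⟨E.comp (((ContinuousLinearMap.compL ℂ A (A →L[ℂ] ℂ) ℂ) n).comp (fdotMapACLM A)),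
      ⟨n, fun f => rfl⟩, ?_⟩
    ext h
    show E (n.comp (fdotMapA (h : A →L[ℂ] ℂ))) = n' h
    rw [honLUC n h h.2]
    exact hn_ext h
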